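/- For all integers u, v, w with u + v = w: (−1)^u·L(u)² + (−1)^v·L(v)² + (−1)^w·L(w)² = (−1)^w·L(u)·L(v)·L(w) + 4, where (−1)^n denotes the integer power (−1)^n extended to integer exponents. -/

import Mathlib

/-- Two sequences satisfying the Fibonacci recurrence on ℤ that agree at 0 and 1 agree everywhere. -/
lemma fib_ext_aux (f g : ℤ → ℤ) (hf : ∀ n : ℤ, f (n + 2) = f (n + 1) + f n)
    (hg : ∀ n : ℤ, g (n + 2) = g (n + 1) + g n)
    (h0 : f 0 = g 0) (h1 : f 1 = g 1) : ∀ n : ℤ, f n = g n := by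
  have key : ∀ n : ℤ, f n = g n ∧ f (n + 1) = g (n + 1) := by
    intro n
    induction n using Int.induction_on with
    | zero => exact ⟨h0, by simpa using h1⟩
    | succ i ih =>
        refine ⟨ih.2, ?_⟩
        have hfi := hf i
        have hgi := hg i
        rw [show (i : ℤ) + 1 + 1 = i + 2 by ring]
        rw [hfi, hgi, ih.1, ih.2]
    | pred i ih =>
        have hfi := hf (-(i:ℤ) - 1)
        have hgi := hg (-(i:ℤ) - 1)
        rw [show -(i:ℤ) - 1 + 2 = -i + 1 by ring, show -(i:ℤ) - 1 + 1 = -i by ring] at hfi hgi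
        constructor
        · have : f (-(i:ℤ) - 1) = f (-(i:ℤ) + 1) - f (-(i:ℤ)) := by linarith
          rw [this, ih.2, ih.1]
          have : g (-(i:ℤ) - 1) = g (-(i:ℤ) + 1) - g (-(i:ℤ)) := by linarith
          linarith
        · rw [show -(i:ℤ) - 1 + 1 = -i by ring]; exact ih.1
  exact fun n => (key n).1

theorem stmt_16 (L : ℤ → ℤ)
    (hL0 : L 0 = 2) (hL1 : L 1 = 1)
    (hL : ∀ n : ℤ, L n = L (n - 1) + L (n - 2))
    (u v w : ℤ) (huvw : u + v = w) :
    (u.negOnePow : ℤ) * L u ^ 2 + (v.negOnePow : ℤ) * L v ^ 2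
        + (w.negOnePow : ℤ) * L w ^ 2
      = (w.negOnePow : ℤ) * L u * L v * L w + 4 := by
  -- recurrence in convenient form
  have hrec : ∀ n : ℤ, L (n + 2) = L (n + 1) + L n := by
    intro n
    have h := hL (n + 2)
    rw [show n + 2 - 1 = n + 1 by ring, show n + 2 - 2 = n by ring] at h
    exact h
  -- sign abbreviations
  set e : ℤ → ℤ := fun n => (n.negOnePow : ℤ) with he
  have he_add : ∀ a b : ℤ, e (a + b) = e a * e b := by
    intro a b
    simp [he, Int.negOnePow_add]
  have he_sq : ∀ a : ℤ, e a * e a = 1 := by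
    intro a
    have : e (a + a) = e a * e a := he_add a a
    rw [← this]
    simp [he, Int.negOnePow_even _ ⟨a, rfl⟩]
  have he_neg : ∀ a : ℤ, e (-a) = e a := by
    intro a
    simp [he, Int.negOnePow_neg]
  have he_succ : ∀ a : ℤ, e (a + 1) = -e a := by
    intro a
    simp [he, Int.negOnePow_succ]
  -- key product identity
  have key : ∀ m n : ℤ, L m * L n = L (m + n) + e n * L (m - n) := by
    intro m
    apply fib_ext_aux (fun n => L m * L n) (fun n => L (m + n) + e n * L (m - n))
    · intro n
      show L m * L (n + 2) = L m * L (n + 1) + L m * L n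
      rw [hrec n]; ring
    · intro n
      show L (m + (n + 2)) + e (n + 2) * L (m - (n + 2))
          = (L (m + (n + 1)) + e (n + 1) * L (m - (n + 1))) + (L (m + n) + e n * L (m - n))
      rw [show m + (n + 2) = (m + n) + 2 by ring, hrec (m + n),
        show m - (n + 2) = (m - n - 2) by ring]
      have h2 : L (m - n) = L (m - n - 1) + L (m - n - 2) := hL (m - n)
      have h3 : L (m - n - 1 + 1) = L (m - n - 1) + L (m - n - 1 - 1) := by
        have := hL (m - n - 1 + 1)
        rw [show m - n - 1 + 1 - 1 = m - n - 1 by ring,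
          show m - n - 1 + 1 - 2 = m - n - 1 - 1 by ring] at this
        exact this
      have e2 : e (n + 2) = e n := by
        rw [show n + 2 = (n + 1) + 1 by ring, he_succ, he_succ]; ring
      have e1 : e (n + 1) = -e n := he_succ n
      rw [e2, e1, show m + (n + 1) = m + n + 1 by ring, show m - (n + 1) = m - n - 1 by ring]
      linear_combination (-e n) * h2
    · show L m * L 0 = L (m + 0) + e 0 * L (m - 0)
      have e0 : e 0 = 1 := by simp [he]
      simp [hL0, e0]
      ring
    · show L m * L 1 = L (m + 1) + e 1 * L (m - 1)
      have h1 : L (m + 1) = L m + L (m - 1) := by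
        have := hL (m + 1)
        rw [show m + 1 - 1 = m by ring, show m + 1 - 2 = m - 1 by ring] at this
        exact this
      rw [hL1, show e 1 = -1 by have h10 := he_succ 0; simp only [zero_add] at h10; rw [h10]; simp [he], h1]
      ring
  subst huvw
  have h1 : L u * L v = L (u + v) + e v * L (u - v) := key u v
  have hsu : L u * L u = L (u + u) + e u * 2 := by rw [key u u]; simp [hL0]
  have hsv : L v * L v = L (v + v) + e v * 2 := by rw [key v v]; simp [hL0]
  have hp : L (u + v) * L (u - v) = L (u + u) + e (u - v) * L (v + v) := by
    have := key (u + v) (u - v)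
    rw [show u + v + (u - v) = u + u by ring, show u + v - (u - v) = v + v by ring] at this
    exact this
  have euv : e (u + v) = e u * e v := he_add u v
  have euv' : e (u - v) = e u * e v := by
    rw [show u - v = u + (-v) by ring, he_add, he_neg]
  show e u * L u ^ 2 + e v * L v ^ 2 + e (u + v) * L (u + v) ^ 2
      = e (u + v) * L u * L v * L (u + v) + 4
  rw [euv'] at hp
  rw [euv]
  linear_combination (e u) * hsu + (e v) * hsv - (e u * e v * L (u + v)) * h1
    + 2 * he_sq u + 2 * he_sq v - (e u * L (u + v) * L (u - v)) * he_sq v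
    - (e u) * hp - (e v * L (v + v)) * he_sq u
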